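/- Let H be a complex Hilbert space, let K be a bounded self-adjoint operator on H with K ≥ 0, let A be a bounded self-adjoint operator with A ≥ 1, and set R := K(1+K)^{−1}. If ‖K^{1/2}(A − 1)K^{1/2}‖ = θ < 1, then 1 − R^{1/2} A R^{1/2} ≥ (1 − θ)(1+K)^{−1} ≥ ((1 − θ)/(1 + ‖K‖))·1; in particular 0 ≤ R^{1/2} A R^{1/2} ≤ (1 − (1 − θ)/(1 + ‖K‖))·1 and ‖R^{1/2} A R^{1/2}‖ < 1. -/

import Mathlib

set_option synthInstance.maxHeartbeats 1000000
set_option maxHeartbeats 1000000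


open ContinuousLinearMap

private lemma rsmul_nonneg' {A : Type*} [Ring A] [StarRing A] [PartialOrder A]
    [StarOrderedRing A] [Algebra ℝ A] [StarModule ℝ A] {r : ℝ} (hr : 0 ≤ r) {a : A}
    (ha : 0 ≤ a) : 0 ≤ r • a := by
  have h1 : r • a = star (Real.sqrt r • (1 : A)) * a * (Real.sqrt r • (1 : A)) := by
    simp [smul_mul_assoc, mul_smul_comm, smul_smul, Real.mul_self_sqrt hr]
  rw [h1]
  exact star_left_conjugate_nonneg ha _


/-- Let `H` be a complex Hilbert space, `K ≥ 0` bounded self-adjoint,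
`A ≥ 1` bounded self-adjoint, `R = K(1+K)^{−1}`.  If `‖K^{1/2}(A−1)K^{1/2}‖ = θ < 1`,
then `1 − R^{1/2} A R^{1/2} ≥ (1−θ)(1+K)^{−1} ≥ ((1−θ)/(1+‖K‖))·1`; in particular
`0 ≤ R^{1/2} A R^{1/2} ≤ (1 − (1−θ)/(1+‖K‖))·1` and `‖R^{1/2} A R^{1/2}‖ < 1`.
(Here `≥` is the Loewner order, expressed through positivity of differences, and the
positive square roots are characterized by the listed hypotheses.) -/
theorem stmt_14 {H : Type*} [NormedAddCommGroup H] [InnerProductSpace ℂ H]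
    [CompleteSpace H]
    (K A J sqK sqR : H →L[ℂ] H) (θ : ℝ)
    (hK : K.IsPositive) (hA : (A - 1).IsPositive)
    -- `J = (1+K)⁻¹`
    (hJ1 : (1 + K) * J = 1) (hJ2 : J * (1 + K) = 1)
    -- `sqK = K^{1/2}`, the positive square root of `K`
    (hsqK : sqK.IsPositive) (hsqK2 : sqK * sqK = K)
    -- `sqR = R^{1/2}`, the positive square root of `R = K(1+K)^{−1}`
    (hsqR : sqR.IsPositive) (hsqR2 : sqR * sqR = K * J)
    (hθ : ‖sqK * (A - 1) * sqK‖ = θ) (hθ1 : θ < 1) :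
    -- `1 − R^{1/2} A R^{1/2} ≥ (1−θ)(1+K)^{−1}`
    ((1 - sqR * A * sqR) - (1 - θ) • J).IsPositive ∧
    -- `(1−θ)(1+K)^{−1} ≥ ((1−θ)/(1+‖K‖))·1`
    ((1 - θ) • J - ((1 - θ) / (1 + ‖K‖)) • (1 : H →L[ℂ] H)).IsPositive ∧
    -- `0 ≤ R^{1/2} A R^{1/2}`
    (sqR * A * sqR).IsPositive ∧
    -- `R^{1/2} A R^{1/2} ≤ (1 − (1−θ)/(1+‖K‖))·1`
    ((1 - (1 - θ) / (1 + ‖K‖)) • (1 : H →L[ℂ] H) - sqR * A * sqR).IsPositive ∧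
    -- `‖R^{1/2} A R^{1/2}‖ < 1`
    ‖sqR * A * sqR‖ < 1 := by
  have hKnn : (0 : H →L[ℂ] H) ≤ K := (nonneg_iff_isPositive K).2 hK
  have hKsa : IsSelfAdjoint K := hK.isSelfAdjoint
  have hBnn : (0 : H →L[ℂ] H) ≤ A - 1 := (nonneg_iff_isPositive _).2 hA
  have hsqKnn : (0 : H →L[ℂ] H) ≤ sqK := (nonneg_iff_isPositive _).2 hsqK
  have hsqRnn : (0 : H →L[ℂ] H) ≤ sqR := (nonneg_iff_isPositive _).2 hsqR
  have hspec : ∀ x ∈ spectrum ℝ K, 0 ≤ x := spectrum_nonneg_of_nonneg hKnn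
  have h1x : ∀ x ∈ spectrum ℝ K, (0 : ℝ) < 1 + x := fun x hx => by linarith [hspec x hx]
  -- continuity facts
  have hcJ : ContinuousOn (fun x : ℝ => (1 + x)⁻¹) (spectrum ℝ K) :=
    ContinuousOn.inv₀ (by fun_prop) (fun x hx => (h1x x hx).ne')
  have hcT : ContinuousOn (fun x : ℝ => Real.sqrt (1 + x)⁻¹) (spectrum ℝ K) :=
    Real.continuous_sqrt.comp_continuousOn hcJ
  -- `1 + K` as cfc
  have hIK : cfc (fun x : ℝ => 1 + x) K = 1 + K := by
    rw [cfc_const_add 1 (fun x : ℝ => x) K, cfc_id' ℝ K, map_one]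
  -- `J` as cfc
  have hJeq : cfc (fun x : ℝ => (1 + x)⁻¹) K = J := by
    have h2 : cfc (fun x : ℝ => (1 + x)⁻¹) K * (1 + K) = 1 := by
      rw [← hIK, ← cfc_mul _ _ K hcJ (by fun_prop)]
      rw [cfc_congr (g := fun _ => (1 : ℝ)) (fun x hx => inv_mul_cancel₀ (h1x x hx).ne')]
      exact cfc_const_one ℝ K
    calc cfc (fun x : ℝ => (1 + x)⁻¹) K
        = cfc (fun x : ℝ => (1 + x)⁻¹) K * ((1 + K) * J) := by rw [hJ1, mul_one]
      _ = (cfc (fun x : ℝ => (1 + x)⁻¹) K * (1 + K)) * J := by rw [mul_assoc]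
      _ = J := by rw [h2, one_mul]
  -- `sqK` as cfc
  have hsqKeq : cfc Real.sqrt K = sqK := by
    have ha1 : cfc Real.sqrt K * cfc Real.sqrt K = K := by
      rw [← cfc_mul _ _ K (by fun_prop) (by fun_prop),
        cfc_congr (g := fun x : ℝ => x) (fun x hx => Real.mul_self_sqrt (hspec x hx)),
        cfc_id' ℝ K]
    rw [← CFC.sqrt_unique ha1 (cfc_nonneg fun x _ => Real.sqrt_nonneg x),
      CFC.sqrt_unique hsqK2 hsqKnn]
  -- `T := sqrt J` as cfc
  set T : H →L[ℂ] H := cfc (fun x : ℝ => Real.sqrt (1 + x)⁻¹) K with hT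
  have hTnn : (0 : H →L[ℂ] H) ≤ T := cfc_nonneg fun x _ => Real.sqrt_nonneg _
  have hT2 : T * T = J := by
    rw [hT, ← cfc_mul _ _ K hcT hcT,
      cfc_congr (g := fun x : ℝ => (1 + x)⁻¹)
        (fun x hx => Real.mul_self_sqrt (inv_pos.2 (h1x x hx)).le), hJeq]
  -- `sqR = sqK * T`
  have hcKT : Commute sqK T := by
    rw [← hsqKeq, hT]; exact cfc_commute_cfc _ _ K
  have hsqRT : sqR = sqK * T := by
    have hprod : sqK * T = cfc (fun x : ℝ => Real.sqrt x * Real.sqrt (1 + x)⁻¹) K := by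
      rw [cfc_mul _ _ K (by fun_prop) hcT, hsqKeq, hT]
    have hnn : (0 : H →L[ℂ] H) ≤ sqK * T := by
      rw [hprod]; exact cfc_nonneg fun x hx => by positivity
    have hsq : (sqK * T) * (sqK * T) = K * J := by
      calc (sqK * T) * (sqK * T) = sqK * (T * sqK) * T := by noncomm_ring
        _ = sqK * (sqK * T) * T := by rw [hcKT.eq]
        _ = (sqK * sqK) * (T * T) := by noncomm_ring
        _ = K * J := by rw [hsqK2, hT2]
    rw [← CFC.sqrt_unique hsqR2 hsqRnn, CFC.sqrt_unique hsq hnn]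
  -- core inequality : sqR (A-1) sqR ≤ θ • J
  have hPnn : (0 : H →L[ℂ] H) ≤ sqK * (A - 1) * sqK := by
    have := star_left_conjugate_nonneg hBnn sqK
    rwa [hsqK.isSelfAdjoint.star_eq] at this
  have hPle : sqK * (A - 1) * sqK ≤ θ • 1 := by
    have h := IsSelfAdjoint.le_algebraMap_norm_self (a := sqK * (A - 1) * sqK)
      (IsSelfAdjoint.of_nonneg hPnn)
    rwa [hθ, Algebra.algebraMap_eq_smul_one] at h
  have hkey : sqR * (A - 1) * sqR ≤ θ • J := by
    have h := star_left_conjugate_le_conjugate hPle T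
    have hst : star T = T := (IsSelfAdjoint.of_nonneg hTnn).star_eq
    rw [hst] at h
    have hL : T * (sqK * (A - 1) * sqK) * T = sqR * (A - 1) * sqR := by
      calc T * (sqK * (A - 1) * sqK) * T = (T * sqK) * (A - 1) * (sqK * T) := by noncomm_ring
        _ = (sqK * T) * (A - 1) * (sqK * T) := by rw [hcKT.eq]
        _ = sqR * (A - 1) * sqR := by rw [hsqRT]
    have hR : T * (θ • (1 : H →L[ℂ] H)) * T = θ • J := by
      rw [mul_smul_comm, mul_one, smul_mul_assoc, hT2]
    rwa [hL, hR] at h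
  have hKJ : K * J = 1 - J := by
    have h := hJ1; rw [add_mul, one_mul] at h
    rw [← h]; abel
  -- `1 ≤ c • J` where `c = 1 + ‖K‖`
  set c : ℝ := 1 + ‖K‖ with hc
  have hcpos : (0 : ℝ) < c := by positivity
  have hθ0 : 0 ≤ θ := hθ ▸ norm_nonneg _
  have h1K : 1 + K ≤ c • (1 : H →L[ℂ] H) := by
    have hKle : K ≤ ‖K‖ • (1 : H →L[ℂ] H) := by
      have h := hKsa.le_algebraMap_norm_self
      rwa [Algebra.algebraMap_eq_smul_one] at h
    calc 1 + K ≤ 1 + ‖K‖ • (1 : H →L[ℂ] H) := add_le_add_right hKle 1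
      _ = c • (1 : H →L[ℂ] H) := by rw [hc, add_smul, one_smul]
  have hTKc : Commute T K := by
    have h := cfc_commute_cfc (fun x : ℝ => Real.sqrt (1 + x)⁻¹) (fun x : ℝ => x) K
    rwa [cfc_id' ℝ K, ← hT] at h
  have hc1 : (1 : H →L[ℂ] H) ≤ c • J := by
    have h := star_left_conjugate_le_conjugate h1K T
    rw [(IsSelfAdjoint.of_nonneg hTnn).star_eq] at h
    have hL : T * (1 + K) * T = 1 := by
      have hcm : T * (1 + K) = (1 + K) * T := ((Commute.one_right T).add_right hTKc).eq
      rw [hcm, mul_assoc, hT2, hJ1]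
    have hR : T * (c • (1 : H →L[ℂ] H)) * T = c • J := by
      rw [mul_smul_comm, mul_one, smul_mul_assoc, hT2]
    rwa [hL, hR] at h
  have hJc : (0 : H →L[ℂ] H) ≤ J - (1 / c) • 1 := by
    have hid : J - (1 / c) • (1 : H →L[ℂ] H) = (1 / c) • (c • J - 1) := by
      rw [smul_sub, smul_smul, one_div, inv_mul_cancel₀ hcpos.ne', one_smul]
    rw [hid]
    exact rsmul_nonneg' (by positivity) (sub_nonneg.2 hc1)
  -- Goal 1
  have G1 : (0 : H →L[ℂ] H) ≤ (1 - sqR * A * sqR) - (1 - θ) • J := by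
    have hAeq : sqR * A * sqR = sqR * (A - 1) * sqR + (1 - J) := by
      have h : sqR * A * sqR = sqR * (A - 1) * sqR + sqR * sqR := by noncomm_ring
      rw [h, hsqR2, hKJ]
    have hid1 : (1 - sqR * A * sqR) - (1 - θ) • J = θ • J - sqR * (A - 1) * sqR := by
      rw [hAeq, sub_smul, one_smul]; abel
    rw [hid1]
    exact sub_nonneg.2 hkey
  -- Goal 2
  have G2 : (0 : H →L[ℂ] H) ≤ (1 - θ) • J - ((1 - θ) / c) • 1 := by
    have hid2 : (1 - θ) • J - ((1 - θ) / c) • (1 : H →L[ℂ] H)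
        = (1 - θ) • (J - (1 / c) • 1) := by
      rw [smul_sub, smul_smul, mul_one_div]
    rw [hid2]
    exact rsmul_nonneg' (by linarith) hJc
  -- Goal 3
  have G3 : (0 : H →L[ℂ] H) ≤ sqR * A * sqR := by
    have hAnn : (0 : H →L[ℂ] H) ≤ A := by
      have h1 : (0 : H →L[ℂ] H) ≤ 1 := (nonneg_iff_isPositive _).2 isPositive_one
      have := add_nonneg hBnn h1
      rwa [sub_add_cancel] at this
    have h := star_left_conjugate_nonneg hAnn sqR
    rwa [hsqR.isSelfAdjoint.star_eq] at h
  -- Goal 4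
  have G4 : (0 : H →L[ℂ] H) ≤ (1 - (1 - θ) / c) • 1 - sqR * A * sqR := by
    have hid4 : (1 - (1 - θ) / c) • (1 : H →L[ℂ] H) - sqR * A * sqR
        = ((1 - sqR * A * sqR) - (1 - θ) • J) + ((1 - θ) • J - ((1 - θ) / c) • 1) := by
      rw [sub_smul, one_smul]; abel
    rw [hid4]
    exact add_nonneg G1 G2
  -- Goal 5
  have hdiv : 0 < (1 - θ) / c := div_pos (by linarith) hcpos
  have hdle : (1 - θ) / c ≤ 1 := by
    rw [div_le_one hcpos]
    have := norm_nonneg K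
    linarith
  have G5 : ‖sqR * A * sqR‖ < 1 := by
    have hle : ‖sqR * A * sqR‖ ≤ 1 - (1 - θ) / c := by
      refine (CStarAlgebra.norm_le_iff_le_algebraMap _ (by linarith) G3).2 ?_
      rw [Algebra.algebraMap_eq_smul_one]
      exact sub_nonneg.1 G4
    linarith
  exact ⟨(nonneg_iff_isPositive _).1 G1, (nonneg_iff_isPositive _).1 G2,
    (nonneg_iff_isPositive _).1 G3, (nonneg_iff_isPositive _).1 G4, G5⟩
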